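/- Let g be a finite-dimensional real Lie algebra containing an abelian ideal a of codimension 2, and J a complex structure on g with J(a) ≠ a and [g,g] ⊄ a. Assume J is degenerate, i.e. [J𝔟, a] ⊆ a_J. Let x ∈ 𝔟 \ a_J and y ∈ a with a = a_J ⊕ ℝx ⊕ ℝy, and let c', d' be the reals with [Jy,y] − (c'x + d'y) ∈ a_J. Then d' = 0 if and only if [g,a] ⊆ 𝔟. In particular, whether d' = 0 holds is independent of the choice of x and y (hence of the Hermitian metric used to make the choice). -/

import Mathlib

open Module

section Defs

variable {L : Type*} [LieRing L] [LieAlgebra ℝ L]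

/-- A complex structure on a real Lie algebra: `J² = -id` plus integrability. -/
def IsComplexStructure (J : L →ₗ[ℝ] L) : Prop :=
  (∀ x : L, J (J x) = -x) ∧
  (∀ x y : L, ⁅x, y⁆ - ⁅J x, J y⁆ + J ⁅J x, y⁆ + J ⁅x, J y⁆ = 0)

/-- A Lie algebra is unimodular if every `ad x` is traceless. -/
def IsUnimodularLie (L : Type*) [LieRing L] [LieAlgebra ℝ L] : Prop :=
  ∀ x : L, LinearMap.trace ℝ L (LieAlgebra.ad ℝ L x) = 0

/-- A Hermitian metric on `(L, J)`: a `J`-compatible inner product. -/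
structure HermMetric (J : L →ₗ[ℝ] L) : Type _ where
  B : L →ₗ[ℝ] L →ₗ[ℝ] ℝ
  symm : ∀ x y : L, B x y = B y x
  posdef : ∀ x : L, x ≠ 0 → 0 < B x x
  compat : ∀ x y : L, B (J x) (J y) = B x y

variable {J : L →ₗ[ℝ] L}

/-- The Kähler form `ω(x,y) = ⟨Jx, y⟩`. -/
def HermMetric.omega (g : HermMetric J) (x y : L) : ℝ := g.B (J x) y

/-- Exterior differential of the Kähler form. -/
def HermMetric.dOmega (g : HermMetric J) (x y z : L) : ℝ :=
  - g.omega ⁅x, y⁆ z + g.omega ⁅x, z⁆ y - g.omega ⁅y, z⁆ x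

/-- `dᶜω (x,y,z) = -dω(Jx, Jy, Jz)`. -/
def HermMetric.dcOmega (g : HermMetric J) (x y z : L) : ℝ :=
  - g.dOmega (J x) (J y) (J z)

/-- `d(dᶜω)` as a 4-form. -/
def HermMetric.ddcOmega (g : HermMetric J) (x y z w : L) : ℝ :=
  - g.dcOmega ⁅x, y⁆ z w + g.dcOmega ⁅x, z⁆ y w - g.dcOmega ⁅x, w⁆ y z
  - g.dcOmega ⁅y, z⁆ x w + g.dcOmega ⁅y, w⁆ x z - g.dcOmega ⁅z, w⁆ x y

/-- The metric is Kähler if `dω = 0`. -/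
def HermMetric.IsKahler (g : HermMetric J) : Prop :=
  ∀ x y z : L, g.dOmega x y z = 0

/-- The metric is pluriclosed if `d(dᶜω) = 0`. -/
def HermMetric.IsPluriclosed (g : HermMetric J) : Prop :=
  ∀ x y z w : L, g.ddcOmega x y z w = 0

/-- The metric is balanced (dimension `2n`): for every orthonormal basis `f`,
`Σ_k dω(f_k, J f_k, x) = 0` for all `x`. -/
def HermMetric.IsBalanced (g : HermMetric J) (n : ℕ) : Prop :=
  ∀ f : Basis (Fin (2 * n)) ℝ L,
    (∀ i j, g.B (f i) (f j) = if i = j then 1 else 0) →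
    ∀ x : L, (∑ k, g.dOmega (f k) (J (f k)) x) = 0

end Defs

theorem stmt9
    {L : Type*} [LieRing L] [LieAlgebra ℝ L] [FiniteDimensional ℝ L]
    (a : LieIdeal ℝ L)
    (habel : ∀ u ∈ a.toSubmodule, ∀ v ∈ a.toSubmodule, ⁅u, v⁆ = (0 : L))
    (hcodim : finrank ℝ ↥a.toSubmodule + 2 = finrank ℝ L)
    (J : L →ₗ[ℝ] L) (hJ : IsComplexStructure J)
    (hJa : a.toSubmodule.map J ≠ a.toSubmodule)
    (hnonab : ¬ ∀ u v : L, ⁅u, v⁆ ∈ a.toSubmodule)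
    (aJ a' bb : Submodule ℝ L)
    (haJ : aJ = a.toSubmodule ⊓ a.toSubmodule.map J)
    (ha' : a' = a.toSubmodule ⊔ Submodule.span ℝ {z : L | ∃ u v : L, ⁅u, v⁆ = z})
    (hbb : bb = a.toSubmodule ⊓ a'.map J)
    (hdeg : ∀ u ∈ bb, ∀ v ∈ a.toSubmodule, ⁅J u, v⁆ ∈ aJ)
    (x y : L) (hxb : x ∈ bb) (hxnot : x ∉ aJ) (hy : y ∈ a.toSubmodule)
    (hspanx : a.toSubmodule = aJ ⊔ Submodule.span ℝ {x} ⊔ Submodule.span ℝ {y})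
    (hindepx : ∀ (s t : ℝ) (u : L), u ∈ aJ → s • x + t • y + u = 0 → s = 0 ∧ t = 0)
    (c' d' : ℝ) (hc'd' : ⁅J y, y⁆ - (c' • x + d' • y) ∈ aJ) :
    d' = 0 ↔ (∀ z : L, ∀ v ∈ a.toSubmodule, ⁅z, v⁆ ∈ bb) := by
  obtain ⟨hJ2, hJint⟩ := hJ
  have hint : ∀ p q : L, ⁅J p, J q⁆ = ⁅p, q⁆ + J ⁅J p, q⁆ + J ⁅p, J q⁆ := by
    intro p q
    have h := hJint p q
    have h2 : ⁅p, q⁆ + J ⁅J p, q⁆ + J ⁅p, J q⁆ - ⁅J p, J q⁆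
        = ⁅p, q⁆ - ⁅J p, J q⁆ + J ⁅J p, q⁆ + J ⁅p, J q⁆ := by abel
    rw [eq_comm, ← sub_eq_zero, h2, h]
  have hid : ∀ (z v : L), v ∈ a.toSubmodule → ⁅z, v⁆ ∈ a.toSubmodule := by
    intro z v hv
    exact a.lie_mem hv
  have hidl : ∀ (v z : L), v ∈ a.toSubmodule → ⁅v, z⁆ ∈ a.toSubmodule := by
    intro v z hv
    rw [show ⁅v, z⁆ = -⁅z, v⁆ from by rw [lie_skew]]
    exact neg_mem (hid z v hv)
  have haJA : aJ ≤ a.toSubmodule := haJ ▸ inf_le_left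
  have haJbb : aJ ≤ bb := by
    rw [haJ, hbb]
    exact inf_le_inf_left _ (Submodule.map_mono (ha' ▸ le_sup_left))
  have hbbA : bb ≤ a.toSubmodule := hbb ▸ inf_le_left
  have hJaJ : ∀ u ∈ aJ, J u ∈ aJ := by
    intro u hu
    rw [haJ] at hu ⊢
    obtain ⟨w, hwA, hwu⟩ := Submodule.mem_map.mp hu.2
    refine ⟨?_, Submodule.mem_map.mpr ⟨u, hu.1, rfl⟩⟩
    rw [← hwu, hJ2 w]
    exact neg_mem hwA
  -- J as a linear equivalence
  let e : L ≃ₗ[ℝ] L := LinearEquiv.ofLinear J (-J)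
    (by ext z; simp [hJ2]) (by ext z; simp [hJ2])
  have hmapfin : finrank ℝ (a.toSubmodule.map J) = finrank ℝ a.toSubmodule := by
    have h := LinearEquiv.finrank_map_eq e a.toSubmodule
    rwa [show (e : L →ₗ[ℝ] L) = J from rfl] at h
  have hxne : x ≠ 0 := fun h => hxnot (h ▸ aJ.zero_mem)
  have hyne : y ≠ 0 := by
    intro h
    have h2 := (hindepx 0 1 0 aJ.zero_mem (by simp [h])).2
    norm_num at h2
  have hylt : y ∉ aJ ⊔ Submodule.span ℝ {x} := by
    intro hmem
    obtain ⟨u, hu, z, hz, hzy⟩ := Submodule.mem_sup.mp hmem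
    obtain ⟨s, rfl⟩ := Submodule.mem_span_singleton.mp hz
    have h3 : s • x + (-1 : ℝ) • y + u = 0 := by
      rw [neg_one_smul, ← hzy]; abel
    have h4 := (hindepx s (-1) u hu h3).2
    norm_num at h4
  have hfinA : finrank ℝ a.toSubmodule = finrank ℝ aJ + 2 := by
    have hle1 : aJ ⊔ Submodule.span ℝ {x} ≤ a.toSubmodule := by
      refine sup_le haJA ?_
      rw [Submodule.span_singleton_le_iff_mem]; exact hbbA hxb
    have h1 : aJ < aJ ⊔ Submodule.span ℝ {x} := by
      refine lt_of_le_of_ne le_sup_left ?_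
      intro h
      exact hxnot (by rw [h]; exact Submodule.mem_sup_right (Submodule.mem_span_singleton_self x))
    have h2 : aJ ⊔ Submodule.span ℝ {x} < a.toSubmodule := by
      refine lt_of_le_of_ne hle1 ?_
      intro h
      exact hylt (by rw [h]; exact hy)
    have a1 := Submodule.finrank_lt_finrank_of_lt h1
    have a2 := Submodule.finrank_lt_finrank_of_lt h2
    have hup : finrank ℝ a.toSubmodule ≤ finrank ℝ aJ + 2 := by
      calc finrank ℝ a.toSubmodule
          = finrank ℝ ↥(aJ ⊔ Submodule.span ℝ {x} ⊔ Submodule.span ℝ {y}) := by rw [← hspanx]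
        _ ≤ finrank ℝ ↥(aJ ⊔ Submodule.span ℝ {x}) + finrank ℝ ↥(Submodule.span ℝ {y}) :=
            Submodule.finrank_add_le_finrank_add_finrank _ _
        _ ≤ (finrank ℝ aJ + finrank ℝ ↥(Submodule.span ℝ {x})) + finrank ℝ ↥(Submodule.span ℝ {y}) :=
            Nat.add_le_add_right (Submodule.finrank_add_le_finrank_add_finrank _ _) _
        _ = finrank ℝ aJ + 2 := by
            rw [finrank_span_singleton hxne, finrank_span_singleton hyne]
    omega
  have htop : a.toSubmodule ⊔ a.toSubmodule.map J = ⊤ := by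
    apply Submodule.eq_top_of_finrank_eq
    have hsum := Submodule.finrank_sup_add_finrank_inf_eq a.toSubmodule (a.toSubmodule.map J)
    rw [hmapfin, ← haJ] at hsum
    omega
  have hdecompL : ∀ z : L, ∃ p ∈ a.toSubmodule, ∃ q ∈ a.toSubmodule, z = p + J q := by
    intro z
    have hz : z ∈ a.toSubmodule ⊔ a.toSubmodule.map J := by rw [htop]; exact Submodule.mem_top
    obtain ⟨p, hp, j, hj, hpj⟩ := Submodule.mem_sup.mp hz
    obtain ⟨q, hq, rfl⟩ := Submodule.mem_map.mp hj
    exact ⟨p, hp, q, hq, hpj.symm⟩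
  have hAdec : ∀ v ∈ a.toSubmodule, ∃ u ∈ aJ, ∃ s t : ℝ, v = u + s • x + t • y := by
    intro v hv
    rw [hspanx] at hv
    obtain ⟨w, hw, z2, hz2, hwz⟩ := Submodule.mem_sup.mp hv
    obtain ⟨t, rfl⟩ := Submodule.mem_span_singleton.mp hz2
    obtain ⟨u, hu, z1, hz1, huz⟩ := Submodule.mem_sup.mp hw
    obtain ⟨s, rfl⟩ := Submodule.mem_span_singleton.mp hz1
    exact ⟨u, hu, s, t, by rw [← hwz, ← huz]⟩
  have hL4 : ∀ w ∈ a.toSubmodule, ∀ u ∈ aJ, ⁅J w, u⁆ ∈ aJ := by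
    intro w hw u hu
    have h1 : ⁅J w, u⁆ ∈ a.toSubmodule := hid _ _ (haJA hu)
    rw [haJ] at hu ⊢
    refine ⟨h1, ?_⟩
    obtain ⟨q, hq, rfl⟩ := Submodule.mem_map.mp hu.2
    have h2 : ⁅J w, J q⁆ = J (⁅J w, q⁆ + ⁅w, J q⁆) := by
      rw [hint w q, habel w hw q hq, map_add, zero_add]
    rw [h2]
    exact Submodule.mem_map.mpr ⟨_, Submodule.add_mem _ (hid _ _ hq) (hidl _ _ hw), rfl⟩
  have hSsub : ∀ (w z : L), ⁅w, z⁆ ∈ a' := by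
    intro w z
    rw [ha']
    exact Submodule.mem_sup_right (Submodule.subset_span ⟨w, z, rfl⟩)
  have haA' : a.toSubmodule ≤ a' := ha' ▸ le_sup_left
  have hL5 : ∀ q ∈ a.toSubmodule, ∀ u ∈ bb, ⁅J q, u⁆ ∈ bb := by
    intro q hq u hu
    have huA := hbbA hu
    have hJbr : J ⁅J q, u⁆ ∈ a' := by
      have h2 : J ⁅J q, u⁆ = ⁅J q, J u⁆ - J ⁅q, J u⁆ := by
        rw [hint q u, habel q hq u huA, zero_add]; abel
      rw [h2]
      refine Submodule.sub_mem _ (hSsub _ _) (haA' (haJA (hJaJ _ ?_)))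
      rw [show ⁅q, J u⁆ = -⁅J u, q⁆ from by rw [lie_skew]]
      exact neg_mem (hdeg u hu q hq)
    rw [hbb]
    refine ⟨hid _ _ huA, Submodule.mem_map.mpr ⟨-(J ⁅J q, u⁆), neg_mem hJbr, ?_⟩⟩
    rw [map_neg, hJ2, neg_neg]
  have hmain : ⁅J y, y⁆ ∈ bb → ∀ z : L, ∀ v ∈ a.toSubmodule, ⁅z, v⁆ ∈ bb := by
    intro hyy z v hv
    have hJyv : ∀ v1 ∈ a.toSubmodule, ⁅J y, v1⁆ ∈ bb := by
      intro v1 hv1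
      obtain ⟨u, hu, s, t, rfl⟩ := hAdec v1 hv1
      rw [lie_add, lie_add, lie_smul, lie_smul]
      exact Submodule.add_mem _ (Submodule.add_mem _ (haJbb (hL4 y hy u hu))
        (Submodule.smul_mem _ _ (hL5 y hy x hxb))) (Submodule.smul_mem _ _ hyy)
    obtain ⟨p, hp, q, hq, rfl⟩ := hdecompL z
    rw [add_lie, habel p hp v hv, zero_add]
    obtain ⟨u, hu, s, t, rfl⟩ := hAdec q hq
    rw [map_add, map_add, map_smul, map_smul, add_lie, add_lie, smul_lie, smul_lie]
    refine Submodule.add_mem _ (Submodule.add_mem _ ?_ ?_) ?_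
    · exact haJbb (hdeg u (haJbb hu) v hv)
    · exact Submodule.smul_mem _ _ (haJbb (hdeg x hxb v hv))
    · exact Submodule.smul_mem _ _ (hJyv v hv)
  constructor
  · intro hd0 z v hv
    apply hmain _ z v hv
    have h1 : ⁅J y, y⁆ - c' • x ∈ aJ := by
      have h := hc'd'
      rwa [hd0, zero_smul, add_zero] at h
    rw [show ⁅J y, y⁆ = (⁅J y, y⁆ - c' • x) + c' • x from by abel]
    exact Submodule.add_mem _ (haJbb h1) (Submodule.smul_mem _ _ hxb)
  · intro H
    have hyybb := H (J y) y hy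
    have hbbxaJ : ∀ u ∈ bb, ∃ u0 ∈ aJ, ∃ s : ℝ, u = u0 + s • x := by
      intro u hu
      obtain ⟨u0, hu0, s, t, hdec⟩ := hAdec u (hbbA hu)
      rcases eq_or_ne t 0 with ht | ht
      · exact ⟨u0, hu0, s, by rw [hdec, ht, zero_smul, add_zero]⟩
      · exfalso
        have hybb : y ∈ bb := by
          have h5 : t • y = u - u0 - s • x := by rw [hdec]; abel
          have h6 : y = t⁻¹ • (u - u0 - s • x) := by
            rw [← h5, smul_smul, inv_mul_cancel₀ ht, one_smul]
          rw [h6]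
          exact Submodule.smul_mem _ _ (Submodule.sub_mem _
            (Submodule.sub_mem _ hu (haJbb hu0)) (Submodule.smul_mem _ _ hxb))
        have hAbb : a.toSubmodule ≤ bb := by
          rw [hspanx]
          refine sup_le (sup_le haJbb ?_) ?_
          · rw [Submodule.span_singleton_le_iff_mem]; exact hxb
          · rw [Submodule.span_singleton_le_iff_mem]; exact hybb
        apply hnonab
        intro u1 v1
        obtain ⟨p, hp, q, hq, rfl⟩ := hdecompL u1
        obtain ⟨r, hr, s1, hs1, rfl⟩ := hdecompL v1
        rw [add_lie, lie_add, lie_add, habel p hp r hr, zero_add]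
        have e1 : ⁅p, J s1⁆ ∈ a.toSubmodule := by
          rw [show ⁅p, J s1⁆ = -⁅J s1, p⁆ from by rw [lie_skew]]
          exact neg_mem (haJA (hdeg s1 (hAbb hs1) p hp))
        have e2 : ⁅J q, r⁆ ∈ a.toSubmodule := haJA (hdeg q (hAbb hq) r hr)
        have e3 : ⁅J q, J s1⁆ ∈ a.toSubmodule := by
          rw [hint q s1, habel q hq s1 hs1, zero_add]
          refine Submodule.add_mem _ (haJA (hJaJ _ (hdeg q (hAbb hq) s1 hs1))) ?_
          refine haJA (hJaJ _ ?_)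
          rw [show ⁅q, J s1⁆ = -⁅J s1, q⁆ from by rw [lie_skew]]
          exact neg_mem (hdeg s1 (hAbb hs1) q hq)
        exact Submodule.add_mem _ e1 (Submodule.add_mem _ e2 e3)
    obtain ⟨u0, hu0, s, hdecy⟩ := hbbxaJ _ hyybb
    have key := hindepx (s - c') (-d') (u0 - (⁅J y, y⁆ - (c' • x + d' • y)))
      (Submodule.sub_mem _ hu0 hc'd') (by rw [sub_smul, neg_smul, hdecy]; abel)
    have h7 := key.2
    linarith
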